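/- Let u, ũ : ℝ/ℤ → ℝⁿ be C¹ curves with bil(u) < ∞. If ‖(ũ − u)'‖_{L^∞} ≤ 1/(2 bil u), then bil(ũ) ≤ 2 bil(u); in particular ũ is embedded and regular. -/

import Mathlib

open MeasureTheory Set Filter
open scoped RealInnerProductSpace ENNReal Topology

noncomputable section

/-- The distance on the circle `ℝ/ℤ` between the points represented by `x` and `y`. -/
def circDist (x y : ℝ) : ℝ := ‖((x - y : ℝ) : AddCircle (1 : ℝ))‖

/-- The representative of `z` modulo `1` lying in `(-1/2, 1/2]`. -/
def wrap (z : ℝ) : ℝ := 1 / 2 - Int.fract (1 / 2 - z)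

/-- Squared wedge norm `|a ∧ b|² = |a|²|b|² - ⟨a,b⟩²`. -/
def wedgeSq {n : ℕ} (a b : EuclideanSpace ℝ (Fin n)) : ℝ :=
  ‖a‖ ^ 2 * ‖b‖ ^ 2 - ⟪a, b⟫ ^ 2

/-- Wedge inner product `⟨a∧b, c∧d⟩ = ⟨a,c⟩⟨b,d⟩ - ⟨a,d⟩⟨b,c⟩`. -/
def wedgeInner {n : ℕ} (a b c d : EuclideanSpace ℝ (Fin n)) : ℝ :=
  ⟪a, c⟫ * ⟪b, d⟫ - ⟪a, d⟫ * ⟪b, c⟫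

/-- Fundamental domain for double integrals over `(ℝ/ℤ)²`. -/
def unitSq : Set (ℝ × ℝ) := Ioc (0 : ℝ) 1 ×ˢ Ioc (0 : ℝ) 1

/-- The tangent-point functional `TP` (extended-real-valued). -/
def TPe {n : ℕ} (q : ℝ) (u : ℝ → EuclideanSpace ℝ (Fin n)) : ℝ≥0∞ :=
  ENNReal.ofReal (1 / q) *
    ∫⁻ p in unitSq, ENNReal.ofReal
      (wedgeSq (deriv u p.2) (u p.1 - u p.2) ^ (q / 2) / ‖u p.1 - u p.2‖ ^ (2 * q))

/-- The tangent-point functional `TP` (real-valued). -/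
def TPr {n : ℕ} (q : ℝ) (u : ℝ → EuclideanSpace ℝ (Fin n)) : ℝ := (TPe q u).toReal

/-- The `q`-th power of the Sobolev–Slobodeckii seminorm `[f]_{W^{s,q}}` on `ℝ/ℤ`. -/
def sobSemPow {n : ℕ} (s q : ℝ) (f : ℝ → EuclideanSpace ℝ (Fin n)) : ℝ≥0∞ :=
  ∫⁻ p in unitSq, ENNReal.ofReal (‖f p.1 - f p.2‖ ^ q / circDist p.1 p.2 ^ (1 + s * q))

/-- The `W^{s,q}`-norm `‖f‖_{L^q} + [f]_{W^{s,q}}`. -/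
def Wnorm {n : ℕ} (s q : ℝ) (f : ℝ → EuclideanSpace ℝ (Fin n)) : ℝ :=
  (∫ x in Ioc (0 : ℝ) 1, ‖f x‖ ^ q) ^ (1 / q) + (sobSemPow s q f).toReal ^ (1 / q)

/-- The bi-Lipschitz constant `bil(u) = sup_{x ≢ y} |x-y|_{ℝ/ℤ}/|u(x)-u(y)|`. -/
def bil {n : ℕ} (u : ℝ → EuclideanSpace ℝ (Fin n)) : ℝ≥0∞ :=
  ⨆ (x : ℝ) (y : ℝ) (_ : circDist x y ≠ 0),
    ENNReal.ofReal (circDist x y) / ENNReal.ofReal ‖u x - u y‖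

/-- The `L^∞`-norm of the derivative of `u`. -/
def linfD {n : ℕ} (u : ℝ → EuclideanSpace ℝ (Fin n)) : ℝ≥0∞ :=
  ⨆ x : ℝ, (‖deriv u x‖₊ : ℝ≥0∞)

/-- A periodic curve is embedded if it is injective on the circle `ℝ/ℤ`. -/
def Embedded {n : ℕ} (u : ℝ → EuclideanSpace ℝ (Fin n)) : Prop :=
  ∀ x y : ℝ, u x = u y → ((x : AddCircle (1 : ℝ)) = (y : AddCircle (1 : ℝ)))

/-- A curve is regular if `min_{ℝ/ℤ} |u'| > 0`. -/
def Regular {n : ℕ} (u : ℝ → EuclideanSpace ℝ (Fin n)) : Prop :=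
  0 < ⨅ x : ℝ, ‖deriv u x‖

/-- Orthogonal projection of `b` onto the orthogonal complement of `ℝ a`. -/
def projPerp {n : ℕ} (a b : EuclideanSpace ℝ (Fin n)) : EuclideanSpace ℝ (Fin n) :=
  b - (⟪b, a⟫ / ‖a‖ ^ 2) • a

/-- The classical tangent-point functional (extended-real-valued). -/
def TPcle {n : ℕ} (q : ℝ) (u : ℝ → EuclideanSpace ℝ (Fin n)) : ℝ≥0∞ :=
  ENNReal.ofReal (1 / q) *
    ∫⁻ p in unitSq, ENNReal.ofReal
      (‖projPerp (deriv u p.2) (u p.1 - u p.2)‖ ^ q / ‖u p.1 - u p.2‖ ^ (2 * q) *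
        (‖deriv u p.1‖ * ‖deriv u p.2‖))

/-- The integrand of the functional `M(u; v, w)`. -/
def Mintegrand {n : ℕ} (q : ℝ) (u v w : ℝ → EuclideanSpace ℝ (Fin n)) (p : ℝ × ℝ) : ℝ :=
  wedgeSq (deriv u p.2) (u p.1 - u p.2) ^ ((q - 2) / 2) / ‖u p.1 - u p.2‖ ^ (2 * q) *
    wedgeInner (deriv u p.2) (u p.1 - u p.2) (deriv v p.2)
      (w p.1 - w p.2 - wrap (p.1 - p.2) • deriv w p.2)

/-- The functional `M(u; v, w)` appearing in the first variation of `TP`. -/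
def Mfun {n : ℕ} (q : ℝ) (u v w : ℝ → EuclideanSpace ℝ (Fin n)) : ℝ :=
  ∫ p in unitSq, Mintegrand q u v w p

/-- The integrand of the functional `A(u; v, w)`. -/
def Aintegrand {n : ℕ} (q : ℝ) (u v w : ℝ → EuclideanSpace ℝ (Fin n)) (p : ℝ × ℝ) : ℝ :=
  wedgeSq (deriv u p.2) (u p.1 - u p.2) ^ (q / 2) / ‖u p.1 - u p.2‖ ^ (2 * q + 2) *
    ⟪v p.1 - v p.2, w p.1 - w p.2⟫

/-- The functional `A(u; v, w)` appearing in the first variation of `TP`. -/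
def Afun {n : ℕ} (q : ℝ) (u v w : ℝ → EuclideanSpace ℝ (Fin n)) : ℝ :=
  ∫ p in unitSq, Aintegrand q u v w p

/-- The first variation `δTP(u)[w] = M(u;u,w) + M(u;w,u) - 2A(u;u,w)`. -/
def deltaTP {n : ℕ} (q : ℝ) (u w : ℝ → EuclideanSpace ℝ (Fin n)) : ℝ :=
  Mfun q u u w + Mfun q u w u - 2 * Afun q u u w

/-- The `H²` inner product on periodic curves. -/
def H2inner (v w : ℝ → EuclideanSpace ℝ (Fin 3)) : ℝ :=
  ∫ x in Ioc (0 : ℝ) 1,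
    (⟪v x, w x⟫ + ⟪deriv v x, deriv w x⟫ + ⟪deriv (deriv v) x, deriv (deriv w) x⟫)

/-- The total energy `E(u) = (κ/2)∫|u''|² + ρ TP(u)`. -/
def energyE (κ ρ q : ℝ) (u : ℝ → EuclideanSpace ℝ (Fin 3)) : ℝ :=
  κ / 2 * (∫ x in Ioc (0 : ℝ) 1, ‖deriv (deriv u) x‖ ^ 2) + ρ * TPr q u

section BiLipAux

lemma circDist_eq_abs {x y : ℝ} (h : |x - y| ≤ 1 / 2) : circDist x y = |x - y| := by
  rw [circDist, AddCircle.norm_coe_eq_abs_iff (1 : ℝ) one_ne_zero]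
  simpa using h

lemma circDist_exists_int (x y : ℝ) : ∃ k : ℤ, circDist x y = |x - y - k| := by
  refine ⟨round (x - y), ?_⟩
  rw [circDist, AddCircle.norm_eq]
  norm_num

lemma coe_eq_iff_circDist (x y : ℝ) :
    ((x : AddCircle (1 : ℝ)) = (y : AddCircle (1 : ℝ))) ↔ circDist x y = 0 := by
  have hc : ((x - y : ℝ) : AddCircle (1 : ℝ)) = (x : AddCircle (1 : ℝ)) - (y : AddCircle (1 : ℝ)) := by
    exact AddCircle.coe_sub 1 x y
  rw [circDist, norm_eq_zero, hc, sub_eq_zero]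

end BiLipAux


/-- Lemma 3.7, bi-Lipschitz radius: if `bil(u) < ∞` and
`‖(ũ - u)'‖_{L^∞} ≤ 1/(2 bil u)`, then `bil(ũ) ≤ 2 bil(u)`; in particular `ũ`
is embedded and regular. -/

theorem biLipschitz_radius (n : ℕ) (u v : ℝ → EuclideanSpace ℝ (Fin n))
    (huC1 : ContDiff ℝ 1 u) (huper : Function.Periodic u 1)
    (hvC1 : ContDiff ℝ 1 v) (hvper : Function.Periodic v 1)
    (hbil : bil u < ⊤)
    (hclose : ∀ x, ‖deriv (fun t => v t - u t) x‖ ≤ 1 / (2 * (bil u).toReal)) :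
    bil v ≤ 2 * bil u ∧ Embedded v ∧ Regular v := by
  set L := (bil u).toReal with hLdef
  have hLnn : 0 ≤ L := ENNReal.toReal_nonneg
  -- key inequality for u
  have key : ∀ x y : ℝ, circDist x y ≤ L * ‖u x - u y‖ := by
    intro x y
    rcases eq_or_ne (circDist x y) 0 with h0 | h0
    · rw [h0]; positivity
    have hd : 0 < circDist x y := lt_of_le_of_ne (norm_nonneg _) (Ne.symm h0)
    have hle : ENNReal.ofReal (circDist x y) / ENNReal.ofReal ‖u x - u y‖ ≤ bil u := by
      refine le_iSup_of_le x (le_iSup_of_le y ?_)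
      exact le_iSup (fun _ : circDist x y ≠ 0 =>
        ENNReal.ofReal (circDist x y) / ENNReal.ofReal ‖u x - u y‖) h0
    have hn0 : ENNReal.ofReal ‖u x - u y‖ ≠ 0 := by
      intro h
      rw [h, ENNReal.div_zero (by simpa [ENNReal.ofReal_eq_zero, not_le] using hd)] at hle
      exact absurd (top_le_iff.mp hle) hbil.ne
    have hmul : ENNReal.ofReal (circDist x y) ≤ bil u * ENNReal.ofReal ‖u x - u y‖ :=
      (ENNReal.div_le_iff hn0 ENNReal.ofReal_ne_top).mp hle
    have hbu : bil u = ENNReal.ofReal L := (ENNReal.ofReal_toReal hbil.ne).symm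
    rw [hbu, ← ENNReal.ofReal_mul hLnn] at hmul
    exact (ENNReal.ofReal_le_ofReal_iff (by positivity)).mp hmul
  have hL : 0 < L := by
    by_contra h
    push_neg at h
    have habs : |(0 : ℝ) - 1 / 2| = 1 / 2 := by
      rw [show (0 : ℝ) - 1 / 2 = -(1 / 2) by norm_num, abs_neg, abs_of_nonneg (by norm_num)]
    have h1 : circDist 0 (1 / 2) = 1 / 2 := by
      rw [circDist_eq_abs (le_of_eq habs), habs]
    have := key 0 (1 / 2)
    rw [h1] at this
    nlinarith [norm_nonneg (u 0 - u (1 / 2)), this]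
  -- the difference and its Lipschitz bound on the circle
  set w : ℝ → EuclideanSpace ℝ (Fin n) := fun t => v t - u t with hwdef
  have hwC1 : ContDiff ℝ 1 w := hvC1.sub huC1
  have hwdiff : Differentiable ℝ w := hwC1.differentiable one_ne_zero
  have hwper : Function.Periodic w 1 := fun t => by simp only [hwdef, hvper t, huper t]
  have hwlip : ∀ x y : ℝ, ‖w x - w y‖ ≤ 1 / (2 * L) * circDist x y := by
    intro x y
    obtain ⟨k, hk⟩ := circDist_exists_int x y
    have hper : w (y + (k : ℝ)) = w y := by
      simpa using (hwper.int_mul k) y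
    have hmvt := Convex.norm_image_sub_le_of_norm_deriv_le (f := w) (C := 1 / (2 * L))
      (fun z _ => hwdiff z) (fun z _ => hclose z) convex_univ (Set.mem_univ (y + (k : ℝ)))
      (Set.mem_univ x)
    rw [hper] at hmvt
    calc ‖w x - w y‖ ≤ 1 / (2 * L) * ‖x - (y + (k : ℝ))‖ := hmvt
      _ = 1 / (2 * L) * circDist x y := by
          rw [hk, Real.norm_eq_abs]; ring_nf
  -- lower bound for distances of v
  have hvlow : ∀ x y : ℝ, circDist x y / (2 * L) ≤ ‖v x - v y‖ := by
    intro x y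
    have h1 : circDist x y / L ≤ ‖u x - u y‖ := by
      rw [div_le_iff₀ hL, mul_comm]; exact key x y
    have h2 : ‖w x - w y‖ ≤ circDist x y / (2 * L) := by
      calc ‖w x - w y‖ ≤ 1 / (2 * L) * circDist x y := hwlip x y
        _ = circDist x y / (2 * L) := by ring
    have h4 : ‖u x - u y‖ ≤ ‖v x - v y‖ + ‖w x - w y‖ := by
      have heq : u x - u y = v x - v y - (w x - w y) := by
        simp only [hwdef]; abel
      rw [heq]; exact norm_sub_le _ _
    have h5 : circDist x y / L - circDist x y / (2 * L) = circDist x y / (2 * L) := by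
      field_simp; ring
    linarith
  refine ⟨?_, ?_, ?_⟩
  · -- bil v ≤ 2 * bil u
    have hbu : bil u = ENNReal.ofReal L := (ENNReal.ofReal_toReal hbil.ne).symm
    have h2L : (2 : ℝ≥0∞) * ENNReal.ofReal L = ENNReal.ofReal (2 * L) := by
      rw [ENNReal.ofReal_mul (by norm_num)]
      norm_num
    rw [hbu, h2L]
    refine iSup_le fun x => iSup_le fun y => iSup_le fun h0 => ?_
    have hd : 0 < circDist x y := lt_of_le_of_ne (norm_nonneg _) (Ne.symm h0)
    have hv0 : 0 < ‖v x - v y‖ := lt_of_lt_of_le (by positivity) (hvlow x y)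
    rw [ENNReal.div_le_iff (by simpa [ENNReal.ofReal_eq_zero, not_le] using hv0)
      ENNReal.ofReal_ne_top, ← ENNReal.ofReal_mul (by positivity)]
    apply ENNReal.ofReal_le_ofReal
    have hdd := (div_le_iff₀ (by positivity : (0:ℝ) < 2 * L)).mp (hvlow x y)
    linarith [mul_comm ‖v x - v y‖ (2 * L)]
  · -- Embedded
    intro x y hxy
    rw [coe_eq_iff_circDist]
    by_contra h0
    have hd : 0 < circDist x y := lt_of_le_of_ne (norm_nonneg _) (Ne.symm h0)
    have hv0 : 0 < ‖v x - v y‖ := lt_of_lt_of_le (by positivity) (hvlow x y)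
    rw [hxy] at hv0
    simp at hv0
  · -- Regular
    have hulow : ∀ x : ℝ, 1 / L ≤ ‖deriv u x‖ := by
      intro x
      have hud : HasDerivAt u (deriv u x) x := ((huC1.differentiable one_ne_zero) x).hasDerivAt
      have hT : Tendsto (fun y => ‖slope u x y‖) (𝓝[≠] x) (𝓝 ‖deriv u x‖) :=
        (continuous_norm.tendsto _).comp (hasDerivAt_iff_tendsto_slope.mp hud)
      refine ge_of_tendsto hT ?_
      have hmem : {y : ℝ | |y - x| < 1 / 2} ∈ 𝓝[≠] x := by
        apply nhdsWithin_le_nhds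
        have hb : {y : ℝ | |y - x| < 1 / 2} = Metric.ball x (1 / 2) := by
          ext y; simp [Metric.mem_ball, Real.dist_eq]
        rw [hb]; exact Metric.ball_mem_nhds x (by norm_num)
      filter_upwards [hmem, self_mem_nhdsWithin] with y hy hy'
      have hyx : y ≠ x := hy'
      have hdy : circDist y x = |y - x| := circDist_eq_abs (le_of_lt hy)
      have habs : 0 < |y - x| := abs_pos.mpr (sub_ne_zero.mpr hyx)
      have hkey : |y - x| ≤ L * ‖u y - u x‖ := hdy ▸ key y x
      have hsl : ‖slope u x y‖ = ‖u y - u x‖ / |y - x| := by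
        rw [slope_def_module, norm_smul, norm_inv, Real.norm_eq_abs, div_eq_inv_mul]
      rw [hsl, le_div_iff₀ habs, div_mul_eq_mul_div, div_le_iff₀ hL]
      linarith [mul_comm L ‖u y - u x‖]
    have hvlow' : ∀ x : ℝ, 1 / (2 * L) ≤ ‖deriv v x‖ := by
      intro x
      have hud : DifferentiableAt ℝ u x := (huC1.differentiable one_ne_zero) x
      have hvd : DifferentiableAt ℝ v x := (hvC1.differentiable one_ne_zero) x
      have hdw : deriv w x = deriv v x - deriv u x := by
        simp only [hwdef]; exact deriv_sub hvd hud
      have hc := hclose x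
      rw [hdw] at hc
      have h4 : ‖deriv u x‖ ≤ ‖deriv v x‖ + ‖deriv v x - deriv u x‖ := by
        calc ‖deriv u x‖ = ‖deriv v x - (deriv v x - deriv u x)‖ := by congr 1; abel
          _ ≤ ‖deriv v x‖ + ‖deriv v x - deriv u x‖ := norm_sub_le _ _
      have h5 : 1 / L - 1 / (2 * L) = 1 / (2 * L) := by field_simp; ring
      linarith [hulow x]
    have hpos : (0 : ℝ) < 1 / (2 * L) := by positivity
    exact lt_of_lt_of_le hpos (le_ciInf hvlow')
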